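/- For every ε > 0, P[∃ Φ ∈ H : Â(f_Φ,Υ) − A(f_Φ) ≥ ε] ≤ |H|·exp(−2⌊n/k⌋ε²); consequently, for every δ ∈ (0,1), P[∃ Φ ∈ H : Â(f_Φ,Υ) ≥ A(f_Φ) + √(ln(|H|/δ)/(2⌊n/k⌋))] ≤ δ. -/

import Mathlib

open Real Finset

/-- The fraction of elements of the finite sample space `Ω` satisfying `p`,
i.e. the probability of `p` under the uniform distribution on `Ω`. -/
noncomputable def prFrac {α : Type*} (Ω : Finset α) (p : α → Prop) : ℝ :=
  ((@Finset.filter α p (Classical.decPred p) Ω).card : ℝ) / (Ω.card : ℝ)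

/-- The average of `f` over all size-`k` subsets of `T`. -/
noncomputable def avgk {α : Type*} (k : ℕ) (f : Finset α → ℝ) (T : Finset α) : ℝ :=
  (∑ S ∈ T.powersetCard k, f S) / (T.card.choose k : ℝ)

section Aux


private lemma nonneg_of_deriv {f f' : ℝ → ℝ} (h0 : f 0 = 0)
    (hd : ∀ s ∈ Set.Ici (0:ℝ), HasDerivAt f (f' s) s)
    (hf' : ∀ s ∈ Set.Ici (0:ℝ), 0 ≤ f' s) : ∀ s, 0 ≤ s → 0 ≤ f s := by
  intro s hs
  have hmono : MonotoneOn f (Set.Ici (0:ℝ)) := by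
    apply monotoneOn_of_deriv_nonneg (convex_Ici 0)
    · exact fun x hx => ((hd x hx).continuousAt).continuousWithinAt
    · intro x hx
      rw [interior_Ici] at hx
      exact ((hd x (Set.mem_Ici.2 (le_of_lt hx))).differentiableAt).differentiableWithinAt
    · intro x hx
      rw [interior_Ici] at hx
      rw [(hd x (Set.mem_Ici.2 (le_of_lt hx))).deriv]
      exact hf' x (Set.mem_Ici.2 (le_of_lt hx))
  have := hmono (Set.self_mem_Ici) (Set.mem_Ici.2 hs) hs
  linarith [h0 ▸ this]

/-- Scalar Hoeffding lemma (for `s ≥ 0`). -/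
private lemma hoeffding_scalar {p : ℝ} (hp0 : 0 ≤ p) (hp1 : p ≤ 1) {s : ℝ} (hs : 0 ≤ s) :
    1 - p + p * Real.exp s ≤ Real.exp (p * s + s ^ 2 / 8) := by
  set D : ℝ → ℝ := fun s => 1 - p + p * Real.exp s with hD
  have hDpos : ∀ x ∈ Set.Ici (0:ℝ), 0 < D x := by
    intro x hx
    have : (1:ℝ) ≤ Real.exp x := Real.one_le_exp hx
    simp only [hD]
    nlinarith [Real.exp_pos x]
  have hDd : ∀ x : ℝ, HasDerivAt D (p * Real.exp x) x := by
    intro x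
    exact ((Real.hasDerivAt_exp x).const_mul p).const_add (1 - p)
  set F1 : ℝ → ℝ := fun x => p + x / 4 - p * Real.exp x / D x with hF1
  set F2 : ℝ → ℝ := fun x => 1 / 4 - p * Real.exp x * (1 - p) / (D x) ^ 2 with hF2
  set F0 : ℝ → ℝ := fun x => p * x + x ^ 2 / 8 - Real.log (D x) with hF0
  have h1 : ∀ x ∈ Set.Ici (0:ℝ), HasDerivAt F1 (F2 x) x := by
    intro x hx
    have hne : D x ≠ 0 := ne_of_gt (hDpos x hx)
    have hdiv : HasDerivAt (fun y => p * Real.exp y / D y)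
        ((p * Real.exp x * D x - p * Real.exp x * (p * Real.exp x)) / (D x) ^ 2) x :=
      ((Real.hasDerivAt_exp x).const_mul p).div (hDd x) hne
    have h2 : HasDerivAt (fun y => p + y / 4) (1/4 : ℝ) x := by
      simpa using ((hasDerivAt_id x).div_const 4).const_add p
    have := h2.sub hdiv
    have e : p * Real.exp x * D x - p * Real.exp x * (p * Real.exp x)
        = p * Real.exp x * (1 - p) := by simp only [hD]; ring
    rw [e] at this
    exact this
  have h0 : ∀ x ∈ Set.Ici (0:ℝ), HasDerivAt F0 (F1 x) x := by
    intro x hx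
    have hne : D x ≠ 0 := ne_of_gt (hDpos x hx)
    have hlog : HasDerivAt (fun y => Real.log (D y)) (p * Real.exp x / D x) x :=
      (hDd x).log hne
    have h2 : HasDerivAt (fun y => p * y + y ^ 2 / 8) (p + x / 4) x := by
      have := ((hasDerivAt_pow 2 x).div_const 8).const_add 0
      have h3 : HasDerivAt (fun y : ℝ => p * y) p x := by
        simpa using (hasDerivAt_id x).const_mul p
      have h4 : HasDerivAt (fun y : ℝ => y ^ 2 / 8) (x / 4) x := by
        have := (hasDerivAt_pow 2 x).div_const 8
        exact this.congr_deriv (by norm_num; ring)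
      exact h3.add h4
    exact h2.sub hlog
  have hF2nn : ∀ x ∈ Set.Ici (0:ℝ), 0 ≤ F2 x := by
    intro x hx
    have hDp := hDpos x hx
    rw [hF2, sub_nonneg, div_le_iff₀ (by positivity)]
    simp only [hD]
    nlinarith [sq_nonneg (1 - p - p * Real.exp x), Real.exp_pos x]
  have hF10 : F1 0 = 0 := by
    simp only [hF1, hD, Real.exp_zero]
    field_simp
    ring
  have hF1nn := nonneg_of_deriv hF10 h1 hF2nn
  have hF00 : F0 0 = 0 := by
    simp only [hF0, hD, Real.exp_zero]
    norm_num
  have hF0nn := nonneg_of_deriv hF00 h0 (fun x hx => hF1nn x hx) s hs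
  have hDp := hDpos s hs
  have : Real.log (D s) ≤ p * s + s ^ 2 / 8 := by
    simp only [hF0] at hF0nn; linarith
  calc D s ≤ Real.exp (Real.log (D s)) := by rw [Real.exp_log hDp]
    _ ≤ _ := Real.exp_le_exp.2 this

variable {α : Type*} [DecidableEq α]


variable {α : Type*} [DecidableEq α]

/-- Number of `n`-subsets of `C` containing a fixed `W`. -/
private lemma count_supersets {C W : Finset α} {nn : ℕ} (hW : W ⊆ C) (hw : W.card ≤ nn) :
    ((C.powersetCard nn).filter (fun U => W ⊆ U)).card
      = (C.card - W.card).choose (nn - W.card) := by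
  rw [← Finset.card_sdiff_of_subset hW, ← Finset.card_powersetCard]
  apply Finset.card_bij' (fun U _ => U \ W) (fun V _ => V ∪ W)
  · intro U hU
    simp only [mem_filter, Finset.mem_powersetCard] at hU
    obtain ⟨⟨hUC, hUcard⟩, hWU⟩ := hU
    rw [Finset.mem_powersetCard]
    exact ⟨Finset.sdiff_subset_sdiff hUC (le_refl W), by rw [Finset.card_sdiff_of_subset hWU, hUcard]⟩
  · intro V hV
    rw [Finset.mem_powersetCard] at hV
    obtain ⟨hVC, hVcard⟩ := hV
    have hdisj : Disjoint V W := Finset.sdiff_disjoint.mono_left hVC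
    simp only [mem_filter, Finset.mem_powersetCard]
    refine ⟨⟨Finset.union_subset (hVC.trans Finset.sdiff_subset) hW, ?_⟩,
      Finset.subset_union_right⟩
    rw [Finset.card_union_of_disjoint hdisj, hVcard]
    omega
  · intro U hU
    simp only [mem_filter] at hU
    exact Finset.sdiff_union_of_subset hU.2
  · intro V hV
    rw [Finset.mem_powersetCard] at hV
    have hdisj : Disjoint V W := Finset.sdiff_disjoint.mono_left hV.1
    rw [Finset.union_sdiff_right, Finset.sdiff_eq_self_of_disjoint hdisj]

/-- Number of `k`-subsets of `U` whose part outside `W` has size `i`. -/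
private lemma count_outside {U W : Finset α} (hW : W ⊆ U) {k i : ℕ} (hik : i ≤ k) :
    ((U.powersetCard k).filter (fun S => (S \ W).card = i)).card
      = (U.card - W.card).choose i * W.card.choose (k - i) := by
  rw [← Finset.card_sdiff_of_subset hW, ← Finset.card_powersetCard, ← Finset.card_powersetCard,
    ← Finset.card_product]
  apply Finset.card_bij' (fun S _ => (S \ W, S ∩ W)) (fun z _ => z.1 ∪ z.2)
  · intro S hS
    simp only [mem_filter, Finset.mem_powersetCard] at hS
    obtain ⟨⟨hSU, hScard⟩, hSi⟩ := hS
    have h2 : (S \ W).card + (S ∩ W).card = S.card := Finset.card_sdiff_add_card_inter S W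
    simp only [Finset.mem_product, Finset.mem_powersetCard]
    refine ⟨⟨Finset.sdiff_subset_sdiff hSU (le_refl W), hSi⟩,
      ⟨Finset.inter_subset_right, ?_⟩⟩
    omega
  · intro z hz
    simp only [Finset.mem_product, Finset.mem_powersetCard] at hz
    obtain ⟨⟨h1U, h1c⟩, ⟨h2W, h2c⟩⟩ := hz
    have hdisj : Disjoint z.1 W := Finset.sdiff_disjoint.mono_left h1U
    simp only [mem_filter, Finset.mem_powersetCard]
    refine ⟨⟨Finset.union_subset (h1U.trans Finset.sdiff_subset) (h2W.trans hW), ?_⟩, ?_⟩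
    · rw [Finset.card_union_of_disjoint (hdisj.mono_right h2W), h1c, h2c]
      omega
    · rw [Finset.union_sdiff_distrib, Finset.sdiff_eq_self_of_disjoint hdisj,
        Finset.sdiff_eq_empty_iff_subset.2 h2W, Finset.union_empty, h1c]
  · intro S hS
    exact Finset.sdiff_union_inter S W
  · intro z hz
    simp only [Finset.mem_product, Finset.mem_powersetCard] at hz
    obtain ⟨⟨h1U, h1c⟩, ⟨h2W, h2c⟩⟩ := hz
    have hdisj : Disjoint z.1 W := Finset.sdiff_disjoint.mono_left h1U
    have e1 : (z.1 ∪ z.2) \ W = z.1 := by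
      rw [Finset.union_sdiff_distrib, Finset.sdiff_eq_self_of_disjoint hdisj,
        Finset.sdiff_eq_empty_iff_subset.2 h2W, Finset.union_empty]
    have e2 : (z.1 ∪ z.2) ∩ W = z.2 := by
      rw [Finset.union_inter_distrib_right, Finset.disjoint_iff_inter_eq_empty.1 hdisj,
        Finset.empty_union, Finset.inter_eq_left.2 h2W]
    rw [e1, e2]

private lemma sum_piFinset_cons {M : Type*} [AddCommMonoid M] (r : ℕ) (T : Finset (Finset α))
    (F : (Fin (r + 1) → Finset α) → M) :
    ∑ y ∈ Fintype.piFinset (fun _ : Fin (r + 1) => T), F y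
      = ∑ S ∈ T, ∑ y ∈ Fintype.piFinset (fun _ : Fin r => T), F (Fin.cons S y) := by
  have key : ∑ y ∈ Fintype.piFinset (fun _ : Fin (r + 1) => T), F y
      = ∑ z ∈ T ×ˢ Fintype.piFinset (fun _ : Fin r => T), F (Fin.cons z.1 z.2) := by
    refine Finset.sum_bij' (fun y _ => ((y 0 : Finset α), Fin.tail y))
      (fun z _ => Fin.cons z.1 z.2) ?hi ?hj ?li ?ri ?h
    case hi =>
      intro y hy
      simp only [Fintype.mem_piFinset] at hy
      simp only [Finset.mem_product, Fintype.mem_piFinset]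
      exact ⟨hy 0, fun i => hy i.succ⟩
    case hj =>
      intro z hz
      simp only [Finset.mem_product, Fintype.mem_piFinset] at hz
      simp only [Fintype.mem_piFinset]
      intro i
      refine Fin.cases ?_ ?_ i
      · simpa using hz.1
      · intro j; simpa using hz.2 j
    case li => intro y _; exact Fin.cons_self_tail y
    case ri => intro z _; simp
    case h => intro y _; simp only [Fin.cons_self_tail]
  rw [key, Finset.sum_product]

private lemma sum_piFinset_equiv {M : Type*} [AddCommMonoid M] (m : ℕ) (T : Finset (Finset α))
    (e : Fin m ≃ Fin m) (F : (Fin m → Finset α) → M) :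
    ∑ y ∈ Fintype.piFinset (fun _ : Fin m => T), F y
      = ∑ y ∈ Fintype.piFinset (fun _ : Fin m => T), F (y ∘ e) := by
  refine Finset.sum_bij' (fun y _ => y ∘ e.symm) (fun y _ => y ∘ e) ?hi ?hj ?li ?ri ?h
  case hi =>
    intro y hy; simp only [Fintype.mem_piFinset] at hy ⊢; exact fun i => hy _
  case hj =>
    intro y hy; simp only [Fintype.mem_piFinset] at hy ⊢; exact fun i => hy _
  case li => intro y _; ext i; simp
  case ri => intro y _; ext i; simp
  case h => intro y _; congr 1; ext i; simp

private lemma biUnion_cons (r : ℕ) (S : Finset α) (y : Fin r → Finset α) :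
    (Finset.univ.biUnion (Fin.cons S y : Fin (r + 1) → Finset α)) = S ∪ Finset.univ.biUnion y := by
  ext a
  simp only [Finset.mem_biUnion, Finset.mem_union, Finset.mem_univ, true_and]
  constructor
  · rintro ⟨i, hi⟩
    refine Fin.cases ?_ ?_ i hi
    · intro h; exact Or.inl (by simpa using h)
    · intro j h; exact Or.inr ⟨j, by simpa using h⟩
  · rintro (h | ⟨j, hj⟩)
    · exact ⟨0, by simpa using h⟩
    · exact ⟨j.succ, by simpa using hj⟩

private lemma biUnion_comp_equiv {m : ℕ} (y : Fin m → Finset α) (e : Fin m ≃ Fin m) :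
    Finset.univ.biUnion (y ∘ e) = Finset.univ.biUnion y := by
  ext a
  simp only [Finset.mem_biUnion, Finset.mem_univ, true_and, Function.comp_apply]
  exact ⟨fun ⟨i, hi⟩ => ⟨e i, hi⟩, fun ⟨i, hi⟩ => ⟨e.symm i, by simpa using hi⟩⟩

private def phi (c : ℕ → ℝ) (k nn : ℕ) : ℕ → ℕ → ℝ
  | 0, w => c w
  | r + 1, w => ∑ i ∈ Finset.range (k + 1),
      (((nn - w).choose i * w.choose (k - i) : ℕ) : ℝ) * phi c k nn r (w + i)


private lemma phi_eq (c : ℕ → ℝ) (k : ℕ) (U : Finset α) (r : ℕ) :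
    ∀ W : Finset α, W ⊆ U →
      ∑ y ∈ Fintype.piFinset (fun _ : Fin r => U.powersetCard k),
          c ((W ∪ Finset.univ.biUnion y).card)
        = phi c k U.card r W.card := by
  induction r with
  | zero =>
    intro W hWU
    have h1 : ∀ y ∈ Fintype.piFinset (fun _ : Fin 0 => U.powersetCard k),
        c ((W ∪ Finset.univ.biUnion y).card) = c W.card := by
      intro y _
      congr 2
      simp
    rw [Finset.sum_congr rfl h1, Finset.sum_const]
    have : (Fintype.piFinset (fun _ : Fin 0 => U.powersetCard k)).card = 1 := by
      simp [Fintype.card_piFinset]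
    rw [this, one_smul, phi]
  | succ r ih =>
    intro W hWU
    rw [sum_piFinset_cons]
    have h1 : ∀ S ∈ U.powersetCard k,
        ∑ y ∈ Fintype.piFinset (fun _ : Fin r => U.powersetCard k),
            c ((W ∪ Finset.univ.biUnion (Fin.cons S y)).card)
          = phi c k U.card r (W.card + (S \ W).card) := by
      intro S hS
      rw [Finset.mem_powersetCard] at hS
      have hcard : ∀ y : Fin r → Finset α,
          (W ∪ Finset.univ.biUnion (Fin.cons S y)) = ((W ∪ S) ∪ Finset.univ.biUnion y) := by
        intro y
        rw [biUnion_cons, Finset.union_assoc]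
      have hWS : (W ∪ S).card = W.card + (S \ W).card := by
        rw [← Finset.union_sdiff_self_eq_union,
          Finset.card_union_of_disjoint Finset.disjoint_sdiff]
      calc ∑ y ∈ Fintype.piFinset (fun _ : Fin r => U.powersetCard k),
              c ((W ∪ Finset.univ.biUnion (Fin.cons S y)).card)
          = ∑ y ∈ Fintype.piFinset (fun _ : Fin r => U.powersetCard k),
              c (((W ∪ S) ∪ Finset.univ.biUnion y).card) := by
            apply Finset.sum_congr rfl; intro y _; rw [hcard y]
        _ = phi c k U.card r ((W ∪ S).card) :=
            ih (W ∪ S) (Finset.union_subset hWU hS.1)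
        _ = _ := by rw [hWS]
    rw [Finset.sum_congr rfl h1]
    have hmaps : ∀ S ∈ U.powersetCard k, (S \ W).card ∈ Finset.range (k + 1) := by
      intro S hS
      rw [Finset.mem_powersetCard] at hS
      rw [Finset.mem_range]
      have : (S \ W).card ≤ S.card := Finset.card_le_card Finset.sdiff_subset
      omega
    rw [← Finset.sum_fiberwise_of_maps_to hmaps
      (fun S => phi c k U.card r (W.card + (S \ W).card))]
    rw [phi]
    apply Finset.sum_congr rfl
    intro i hi
    rw [Finset.mem_range] at hi
    have h2 : ∀ S ∈ (U.powersetCard k).filter (fun S => (S \ W).card = i),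
        phi c k U.card r (W.card + (S \ W).card) = phi c k U.card r (W.card + i) := by
      intro S hS
      rw [Finset.mem_filter] at hS
      rw [hS.2]
    rw [Finset.sum_congr rfl h2, Finset.sum_const,
      count_outside hWU (by omega : i ≤ k), nsmul_eq_mul]


private lemma piFinset_filter (C U : Finset α) (k m : ℕ) (hU : U ⊆ C) :
    Fintype.piFinset (fun _ : Fin m => U.powersetCard k)
      = (Fintype.piFinset (fun _ : Fin m => C.powersetCard k)).filter
          (fun y => ∀ j, y j ⊆ U) := by
  ext y
  simp only [Fintype.mem_piFinset, Finset.mem_filter, Finset.mem_powersetCard]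
  constructor
  · intro h
    exact ⟨fun j => ⟨(h j).1.trans hU, (h j).2⟩, fun j => (h j).1⟩
  · intro ⟨h1, h2⟩ j
    exact ⟨h2 j, (h1 j).2⟩

private lemma ubound {m k : ℕ} (y : Fin m → Finset α) (hy : ∀ j, (y j).card = k) :
    (Finset.univ.biUnion y).card ≤ m * k := by
  calc (Finset.univ.biUnion y).card ≤ ∑ j : Fin m, (y j).card := Finset.card_biUnion_le
    _ = m * k := by simp [hy, Finset.sum_const, mul_comm]

private lemma interchange (C : Finset α) (N k n m : ℕ) (hN : C.card = N)
    (hnN : n ≤ N) (hmk : m * k ≤ n) (G : (Fin m → Finset α) → ℝ) :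
    ∑ U ∈ C.powersetCard n, ∑ y ∈ Fintype.piFinset (fun _ : Fin m => U.powersetCard k),
        (((N - (Finset.univ.biUnion y).card).choose (n - (Finset.univ.biUnion y).card) : ℝ))⁻¹
          * G y
      = ∑ y ∈ Fintype.piFinset (fun _ : Fin m => C.powersetCard k), G y := by
  have step1 : ∀ U ∈ C.powersetCard n,
      ∑ y ∈ Fintype.piFinset (fun _ : Fin m => U.powersetCard k),
        (((N - (Finset.univ.biUnion y).card).choose (n - (Finset.univ.biUnion y).card) : ℝ))⁻¹
          * G y
      = ∑ y ∈ Fintype.piFinset (fun _ : Fin m => C.powersetCard k),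
          if (∀ j, y j ⊆ U) then
            (((N - (Finset.univ.biUnion y).card).choose
              (n - (Finset.univ.biUnion y).card) : ℝ))⁻¹ * G y
          else 0 := by
    intro U hU
    rw [Finset.mem_powersetCard] at hU
    rw [piFinset_filter C U k m hU.1, Finset.sum_filter]
  rw [Finset.sum_congr rfl step1, Finset.sum_comm]
  apply Finset.sum_congr rfl
  intro y hy
  simp only [Fintype.mem_piFinset, Finset.mem_powersetCard] at hy
  set W := Finset.univ.biUnion y with hW
  have hWC : W ⊆ C := by
    rw [hW]
    exact Finset.biUnion_subset.2 (fun j _ => (hy j).1)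
  have hWn : W.card ≤ n := le_trans (ubound y (fun j => (hy j).2)) hmk
  have hcount : ((C.powersetCard n).filter (fun U => ∀ j, y j ⊆ U)).card
      = (N - W.card).choose (n - W.card) := by
    have : (C.powersetCard n).filter (fun U => ∀ j, y j ⊆ U)
        = (C.powersetCard n).filter (fun U => W ⊆ U) := by
      apply Finset.filter_congr
      intro U _
      rw [hW]
      constructor
      · intro h; exact Finset.biUnion_subset.2 (fun j _ => h j)
      · intro h j; exact le_trans (Finset.subset_biUnion_of_mem y (Finset.mem_univ j)) h
    rw [this, count_supersets hWC hWn, hN]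
  rw [Finset.sum_ite, Finset.sum_const_zero, add_zero, Finset.sum_const, hcount, nsmul_eq_mul]
  have hpos : 0 < ((N - W.card).choose (n - W.card)) :=
    Nat.choose_pos (by omega)
  field_simp




section Core

variable (C : Finset α) {N k n : ℕ}

private lemma mgf_core (hN : C.card = N) (hk : 1 ≤ k) (hkn : k ≤ n) (hnN : n ≤ N)
    (g : Finset α → ℝ) (hg : ∀ S, g S = 0 ∨ g S = 1) (s : ℝ) :
    ∑ U ∈ C.powersetCard n, Real.exp (((n / k : ℕ) : ℝ) * s * avgk k g U)
      ≤ ((C.powersetCard n).card : ℝ)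
          * (1 + (avgk k g C) * (Real.exp s - 1)) ^ (n / k : ℕ) := by
  have hm1 : 1 ≤ n / k := (Nat.one_le_div_iff hk).2 hkn
  have hmkle : n / k * k ≤ n := Nat.div_mul_le_self n k
  obtain ⟨m', hm'⟩ : ∃ m', n / k = m' + 1 := ⟨n / k - 1, by omega⟩
  rw [hm']
  have hmk : (m' + 1) * k ≤ n := hm' ▸ hmkle
  set c : ℕ → ℝ := fun u => (((N - u).choose (n - u) : ℕ) : ℝ)⁻¹ with hc
  set uu : (Fin (m' + 1) → Finset α) → ℕ := fun y => (Finset.univ.biUnion y).card with huu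
  set Φ : ℝ := phi c k n (m' + 1) 0 with hΦ
  set Dn : ℕ := (C.powersetCard n).card with hDn
  have hDn' : Dn = N.choose n := by rw [hDn, Finset.card_powersetCard, hN]
  have hDnpos : 0 < Dn := by rw [hDn']; exact Nat.choose_pos hnN
  have hKpos : 0 < N.choose k := Nat.choose_pos (le_trans hkn hnN)
  have hpck : (C.powersetCard k).card = N.choose k := by rw [Finset.card_powersetCard, hN]
  -- (A) uniformity of the total weight
  have hA : ∀ U ∈ C.powersetCard n,
      ∑ y ∈ Fintype.piFinset (fun _ : Fin (m' + 1) => U.powersetCard k), c (uu y) = Φ := by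
    intro U hU
    rw [Finset.mem_powersetCard] at hU
    have := phi_eq c k U (m' + 1) ∅ (Finset.empty_subset U)
    simp only [Finset.empty_union, Finset.card_empty] at this
    rw [hΦ, ← hU.2, ← this]
  -- (B) total mass identity
  have hB : (Dn : ℝ) * Φ = ((N.choose k : ℕ) : ℝ) ^ (m' + 1) := by
    have := interchange C N k n (m' + 1) hN hnN hmk (fun _ => 1)
    simp only [mul_one] at this
    calc (Dn : ℝ) * Φ = ∑ U ∈ C.powersetCard n, Φ := by rw [Finset.sum_const, hDn]; ring
      _ = ∑ U ∈ C.powersetCard n,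
            ∑ y ∈ Fintype.piFinset (fun _ : Fin (m' + 1) => U.powersetCard k), c (uu y) :=
          (Finset.sum_congr rfl (fun U hU => (hA U hU).symm))
      _ = ∑ y ∈ Fintype.piFinset (fun _ : Fin (m' + 1) => C.powersetCard k), 1 := this
      _ = ((N.choose k : ℕ) : ℝ) ^ (m' + 1) := by
          rw [Finset.sum_const, Fintype.card_piFinset]
          simp [hpck]
  have hΦpos : 0 < Φ := by
    have h1 : (0:ℝ) < ((N.choose k : ℕ) : ℝ) ^ (m' + 1) := by positivity
    have h2 : (0:ℝ) < (Dn : ℝ) := by exact_mod_cast hDnpos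
    nlinarith
  -- (F) relation Φ = choose(n,k) * phi m' k
  have hF : ∀ U ∈ C.powersetCard n,
      Φ = (n.choose k : ℝ) * phi c k n m' k := by
    intro U hU
    rw [Finset.mem_powersetCard] at hU
    have h1 := hA U (Finset.mem_powersetCard.2 hU)
    rw [sum_piFinset_cons] at h1
    have h2 : ∀ S ∈ U.powersetCard k,
        ∑ y ∈ Fintype.piFinset (fun _ : Fin m' => U.powersetCard k),
          c (uu (Fin.cons S y)) = phi c k n m' k := by
      intro S hS
      rw [Finset.mem_powersetCard] at hS
      have h3 := phi_eq c k U m' S hS.1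
      rw [hU.2, hS.2] at h3
      rw [← h3]
      apply Finset.sum_congr rfl
      intro y _
      congr 1
      simp only [huu]
      rw [biUnion_cons]
    rw [Finset.sum_congr rfl h2, Finset.sum_const, nsmul_eq_mul] at h1
    rw [← h1, Finset.card_powersetCard, hU.2]
  -- coordinate lemma (D)
  have hD : ∀ U ∈ C.powersetCard n, ∀ j : Fin (m' + 1),
      ∑ y ∈ Fintype.piFinset (fun _ : Fin (m' + 1) => U.powersetCard k),
          c (uu y) * g (y j)
        = phi c k n m' k * ∑ S ∈ U.powersetCard k, g S := by
    intro U hU j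
    rw [Finset.mem_powersetCard] at hU
    have e : Fin (m' + 1) ≃ Fin (m' + 1) := Equiv.swap j 0
    have step1 := sum_piFinset_equiv (m' + 1) (U.powersetCard k) (Equiv.swap j 0)
      (fun y => c (uu y) * g (y j))
    have step2 : ∀ y : Fin (m' + 1) → Finset α,
        c (uu (y ∘ (Equiv.swap j 0))) * g ((y ∘ (Equiv.swap j 0)) j)
          = c (uu y) * g (y 0) := by
      intro y
      have h1 : uu (y ∘ (Equiv.swap j 0)) = uu y := by
        rw [huu]; simp only [biUnion_comp_equiv]
      rw [h1]
      simp [Equiv.swap_apply_left]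
    rw [step1]
    simp only [step2]
    rw [sum_piFinset_cons]
    have h4 : ∀ S ∈ U.powersetCard k,
        ∑ y ∈ Fintype.piFinset (fun _ : Fin m' => U.powersetCard k),
            c (uu (Fin.cons S y)) * g ((Fin.cons S y : Fin (m' + 1) → Finset α) 0)
          = g S * phi c k n m' k := by
      intro S hS
      rw [Finset.mem_powersetCard] at hS
      have h3 := phi_eq c k U m' S hS.1
      rw [hU.2, hS.2] at h3
      have h5 : ∀ y : Fin m' → Finset α,
          c (uu (Fin.cons S y)) * g ((Fin.cons S y : Fin (m' + 1) → Finset α) 0)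
          = c ((S ∪ Finset.univ.biUnion y).card) * g S := by
        intro y
        simp only [huu, Fin.cons_zero]
        rw [biUnion_cons]
      simp only [h5]
      rw [← Finset.sum_mul]
      have h3' : ∑ y ∈ Fintype.piFinset (fun _ : Fin m' => U.powersetCard k),
          c ((S ∪ Finset.univ.biUnion y).card) = phi c k n m' k := h3
      rw [h3']
      ring
    rw [Finset.sum_congr rfl h4, ← Finset.sum_mul]
    ring
  -- positivity of phi m' k
  obtain ⟨U₀, hU₀⟩ : (C.powersetCard n).Nonempty := Finset.card_pos.1 hDnpos
  have hchoosenk : (0:ℝ) < (n.choose k : ℝ) := by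
    exact_mod_cast Nat.choose_pos hkn
  have hphik : phi c k n m' k = Φ / (n.choose k : ℝ) := by
    rw [hF U₀ hU₀]
    field_simp
  have hphikpos : 0 < phi c k n m' k := by
    rw [hphik]; positivity
  have hcnonneg : ∀ x, 0 ≤ c x := by
    intro x; rw [hc]; positivity
  -- (E) Jensen per U
  have hE : ∀ U ∈ C.powersetCard n,
      Real.exp (((m' + 1 : ℕ) : ℝ) * s * avgk k g U)
        ≤ Φ⁻¹ * ∑ y ∈ Fintype.piFinset (fun _ : Fin (m' + 1) => U.powersetCard k),
            c (uu y) * Real.exp (s * ∑ j, g (y j)) := by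
    intro U hU
    have hmem := Finset.mem_powersetCard.1 hU
    have h6 : ∑ y ∈ Fintype.piFinset (fun _ : Fin (m' + 1) => U.powersetCard k),
        c (uu y) * (∑ j, g (y j))
        = ((m' + 1 : ℕ) : ℝ) * (phi c k n m' k * ∑ S ∈ U.powersetCard k, g S) := by
      calc ∑ y ∈ Fintype.piFinset (fun _ : Fin (m' + 1) => U.powersetCard k),
              c (uu y) * (∑ j, g (y j))
          = ∑ y ∈ Fintype.piFinset (fun _ : Fin (m' + 1) => U.powersetCard k),
              ∑ j, c (uu y) * g (y j) := by
            apply Finset.sum_congr rfl; intro y _; rw [Finset.mul_sum]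
        _ = ∑ j, ∑ y ∈ Fintype.piFinset (fun _ : Fin (m' + 1) => U.powersetCard k),
              c (uu y) * g (y j) := Finset.sum_comm
        _ = ∑ _j : Fin (m' + 1), phi c k n m' k * ∑ S ∈ U.powersetCard k, g S := by
            apply Finset.sum_congr rfl; intro j _; exact hD U hU j
        _ = _ := by
            rw [Finset.sum_const, Finset.card_univ, Fintype.card_fin, nsmul_eq_mul]
    have hmean : ∑ y ∈ Fintype.piFinset (fun _ : Fin (m' + 1) => U.powersetCard k),
        (c (uu y) / Φ) * (s * ∑ j, g (y j)) = ((m' + 1 : ℕ) : ℝ) * s * avgk k g U := by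
      have expand : ∀ y : Fin (m' + 1) → Finset α,
          (c (uu y) / Φ) * (s * ∑ j, g (y j)) = (s / Φ) * (c (uu y) * (∑ j, g (y j))) := by
        intro y; ring
      rw [Finset.sum_congr rfl (fun y _ => expand y), ← Finset.mul_sum, h6]
      rw [avgk, hmem.2, hphik]
      field_simp
    have sum1 : ∑ y ∈ Fintype.piFinset (fun _ : Fin (m' + 1) => U.powersetCard k),
        c (uu y) / Φ = 1 := by
      rw [← Finset.sum_div, hA U hU, div_self (ne_of_gt hΦpos)]
    have jensen := convexOn_exp.map_sum_le
      (t := Fintype.piFinset (fun _ : Fin (m' + 1) => U.powersetCard k))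
      (w := fun y => c (uu y) / Φ) (p := fun y => s * ∑ j, g (y j))
      (fun y _ => by positivity) sum1 (fun y _ => Set.mem_univ _)
    simp only [smul_eq_mul] at jensen
    rw [hmean] at jensen
    refine le_trans jensen ?_
    rw [Finset.mul_sum]
    apply le_of_eq
    apply Finset.sum_congr rfl
    intro y _
    ring
  -- (G) sum over U and interchange
  have hG : ∑ U ∈ C.powersetCard n, Real.exp (((m' + 1 : ℕ) : ℝ) * s * avgk k g U)
      ≤ Φ⁻¹ * ∑ y ∈ Fintype.piFinset (fun _ : Fin (m' + 1) => C.powersetCard k),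
          Real.exp (s * ∑ j, g (y j)) := by
    refine le_trans (Finset.sum_le_sum hE) ?_
    rw [← Finset.mul_sum]
    apply le_of_eq
    congr 1
    have := interchange C N k n (m' + 1) hN hnN hmk
      (fun y => Real.exp (s * ∑ j, g (y j)))
    rw [← this]
  -- (H) factorization
  have hH : ∑ y ∈ Fintype.piFinset (fun _ : Fin (m' + 1) => C.powersetCard k),
      Real.exp (s * ∑ j, g (y j))
      = (∑ S ∈ C.powersetCard k, Real.exp (s * g S)) ^ (m' + 1) := by
    have h7 : ∀ y : Fin (m' + 1) → Finset α,
        Real.exp (s * ∑ j, g (y j)) = ∏ j, Real.exp (s * g (y j)) := by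
      intro y
      rw [← Real.exp_sum, Finset.mul_sum]
    rw [Finset.sum_congr rfl (fun y _ => h7 y)]
    have h9 := Finset.prod_univ_sum (fun _ : Fin (m' + 1) => C.powersetCard k)
      (fun _ S => Real.exp (s * g S))
    rw [← h9, Finset.prod_const, Finset.card_univ, Fintype.card_fin]
  -- (I) linearization
  have hI : ∑ S ∈ C.powersetCard k, Real.exp (s * g S)
      = ((N.choose k : ℕ) : ℝ) * (1 + avgk k g C * (Real.exp s - 1)) := by
    have h8 : ∀ S ∈ C.powersetCard k,
        Real.exp (s * g S) = 1 + (Real.exp s - 1) * g S := by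
      intro S _
      rcases hg S with h | h <;> rw [h] <;> simp
    rw [Finset.sum_congr rfl h8, Finset.sum_add_distrib, Finset.sum_const, ← Finset.mul_sum,
      hpck, avgk, hN]
    have : (0:ℝ) < (N.choose k : ℝ) := by exact_mod_cast hKpos
    field_simp
    ring
  -- final assembly
  refine le_trans hG ?_
  rw [hH, hI, mul_pow]
  apply le_of_eq
  have hΦne : Φ ≠ 0 := ne_of_gt hΦpos
  have hDneq : Φ⁻¹ * ((N.choose k : ℕ) : ℝ) ^ (m' + 1) = (Dn : ℝ) := by
    rw [← hB]
    field_simp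
  calc Φ⁻¹ * (((N.choose k : ℕ) : ℝ) ^ (m' + 1)
        * (1 + avgk k g C * (Real.exp s - 1)) ^ (m' + 1))
      = (Φ⁻¹ * ((N.choose k : ℕ) : ℝ) ^ (m' + 1))
          * (1 + avgk k g C * (Real.exp s - 1)) ^ (m' + 1) := by ring
    _ = _ := by rw [hDneq]

end Core




private lemma prFrac_congr {γ : Type*} (Ω : Finset γ) (p q : γ → Prop) (h : ∀ x, p x ↔ q x) :
    prFrac Ω p = prFrac Ω q := by
  have hpq : (@Finset.filter _ p (Classical.decPred p) Ω)
      = (@Finset.filter _ q (Classical.decPred q) Ω) := by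
    ext x
    simp only [Finset.mem_filter]
    exact and_congr_right fun _ => h x
  rw [prFrac, prFrac, hpq]

private lemma core_count (C : Finset α) {N k n : ℕ} (hN : C.card = N) (hk : 1 ≤ k)
    (hkn : k ≤ n) (hnN : n ≤ N)
    (g : Finset α → ℝ) (hg : ∀ S, g S = 0 ∨ g S = 1) {ε : ℝ} (hε : 0 < ε)
    [DecidablePred (fun U : Finset α => avgk k g U - avgk k g C ≥ ε)] :
    (((C.powersetCard n).filter (fun U => avgk k g U - avgk k g C ≥ ε)).card : ℝ)
      ≤ ((C.powersetCard n).card : ℝ)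
          * Real.exp (-2 * ((n / k : ℕ) : ℝ) * ε ^ 2) := by
  have hm1 : 1 ≤ n / k := (Nat.one_le_div_iff hk).2 hkn
  set m : ℕ := n / k with hm
  have hmR : (1:ℝ) ≤ (m : ℝ) := by exact_mod_cast hm1
  set s : ℝ := 4 * ε with hs
  have hs0 : 0 ≤ s := by positivity
  set A : ℝ := avgk k g C with hA
  have hKpos : (0:ℝ) < (N.choose k : ℝ) := by
    exact_mod_cast Nat.choose_pos (le_trans hkn hnN)
  have hA0 : 0 ≤ A := by
    rw [hA, avgk, hN]
    apply div_nonneg _ (le_of_lt hKpos)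
    apply Finset.sum_nonneg
    intro S _
    rcases hg S with h | h <;> rw [h] <;> norm_num
  have hA1 : A ≤ 1 := by
    rw [hA, avgk, hN]
    rw [div_le_one hKpos]
    calc ∑ S ∈ C.powersetCard k, g S ≤ ∑ S ∈ C.powersetCard k, 1 := by
          apply Finset.sum_le_sum
          intro S _
          rcases hg S with h | h <;> rw [h] <;> norm_num
      _ = ((N.choose k : ℕ) : ℝ) := by
          rw [Finset.sum_const, Finset.card_powersetCard, hN, nsmul_eq_mul, mul_one]
  -- indicator bound
  have step1 : ∀ (inst : DecidablePred (fun U : Finset α => avgk k g U - avgk k g C ≥ ε)),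
      (((C.powersetCard n).filter (fun U => avgk k g U - avgk k g C ≥ ε)).card : ℝ)
      ≤ ∑ U ∈ C.powersetCard n,
          Real.exp ((m : ℝ) * s * avgk k g U - (m : ℝ) * s * (A + ε)) := by
    intro inst
    rw [Finset.card_eq_sum_ones]
    push_cast
    refine le_trans (Finset.sum_le_sum ?_)
      (Finset.sum_le_sum_of_subset_of_nonneg (Finset.filter_subset _ _)
        (fun U _ _ => le_of_lt (Real.exp_pos _)))
    intro U hU
    rw [Finset.mem_filter] at hU
    have h1 : 0 ≤ (m : ℝ) * s * avgk k g U - (m : ℝ) * s * (A + ε) := by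
      have h2 : ε ≤ avgk k g U - A := hU.2
      have h3 : (0:ℝ) ≤ (m:ℝ) * s := by positivity
      nlinarith
    calc (1:ℝ) = Real.exp 0 := (Real.exp_zero).symm
      _ ≤ _ := Real.exp_le_exp.2 h1
  have step2 : ∑ U ∈ C.powersetCard n,
      Real.exp ((m : ℝ) * s * avgk k g U - (m : ℝ) * s * (A + ε))
      = Real.exp (-((m : ℝ) * s * (A + ε)))
        * ∑ U ∈ C.powersetCard n, Real.exp ((m : ℝ) * s * avgk k g U) := by
    rw [Finset.mul_sum]
    apply Finset.sum_congr rfl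
    intro U _
    rw [← Real.exp_add]
    ring_nf
  have step3 := mgf_core C hN hk hkn hnN g hg s
  have hbase : 0 ≤ 1 + A * (Real.exp s - 1) := by
    have : (1:ℝ) ≤ Real.exp s := Real.one_le_exp hs0
    nlinarith
  have step4 : (1 + A * (Real.exp s - 1)) ^ m ≤ Real.exp (A * s + s ^ 2 / 8) ^ m := by
    apply pow_le_pow_left₀ hbase
    have := hoeffding_scalar hA0 hA1 hs0
    calc 1 + A * (Real.exp s - 1) = 1 - A + A * Real.exp s := by ring
      _ ≤ _ := this
  have exppos : (0:ℝ) < Real.exp (-((m : ℝ) * s * (A + ε))) := Real.exp_pos _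
  have hDn0 : (0:ℝ) ≤ ((C.powersetCard n).card : ℝ) := by positivity
  refine le_trans (step1 _) ?_
  rw [step2]
  calc Real.exp (-((m : ℝ) * s * (A + ε)))
        * ∑ U ∈ C.powersetCard n, Real.exp ((m : ℝ) * s * avgk k g U)
      ≤ Real.exp (-((m : ℝ) * s * (A + ε)))
        * (((C.powersetCard n).card : ℝ) * (1 + A * (Real.exp s - 1)) ^ m) := by
        apply mul_le_mul_of_nonneg_left _ (le_of_lt exppos)
        exact step3
    _ ≤ Real.exp (-((m : ℝ) * s * (A + ε)))
        * (((C.powersetCard n).card : ℝ) * Real.exp (A * s + s ^ 2 / 8) ^ m) := by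
        apply mul_le_mul_of_nonneg_left _ (le_of_lt exppos)
        exact mul_le_mul_of_nonneg_left step4 hDn0
    _ = ((C.powersetCard n).card : ℝ)
        * Real.exp (-((m : ℝ) * s * (A + ε)) + (m : ℝ) * (A * s + s ^ 2 / 8)) := by
        rw [← Real.exp_nat_mul]
        rw [show Real.exp (-((m:ℝ) * s * (A + ε)))
            * (((C.powersetCard n).card : ℝ) * Real.exp ((m:ℝ) * (A * s + s ^ 2 / 8)))
          = ((C.powersetCard n).card : ℝ) * (Real.exp (-((m:ℝ) * s * (A + ε)))
            * Real.exp ((m:ℝ) * (A * s + s ^ 2 / 8))) from by ring, ← Real.exp_add]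
    _ = ((C.powersetCard n).card : ℝ) * Real.exp (-2 * (m : ℝ) * ε ^ 2) := by
        congr 1
        congr 1
        rw [hs]
        ring


end Aux

/-- Uniform-over-class one-sample concentration bound:
`P[∃ Φ ∈ H, Â(f_Φ,Υ) − A(f_Φ) ≥ ε] ≤ |H|·exp(−2⌊n/k⌋ε²)`, and consequently
`P[∃ Φ ∈ H, Â(f_Φ,Υ) ≥ A(f_Φ) + √(ln(|H|/δ)/(2⌊n/k⌋))] ≤ δ`. -/
theorem stmt_12 {α β : Type*} (C : Finset α) (N k n : ℕ)
    (hN : C.card = N) (hk : 1 ≤ k) (hkn : k ≤ n) (hnN : n ≤ N)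
    (H : Finset β) (hH : H.Nonempty)
    (f : β → Finset α → ℝ) (hf : ∀ Φ S, f Φ S = 0 ∨ f Φ S = 1) :
    (∀ ε : ℝ, 0 < ε →
      prFrac (C.powersetCard n)
          (fun Υ => ∃ Φ ∈ H, avgk k (f Φ) Υ - avgk k (f Φ) C ≥ ε)
        ≤ (H.card : ℝ) * Real.exp (-2 * ((n / k : ℕ) : ℝ) * ε ^ 2)) ∧
    (∀ δ : ℝ, δ ∈ Set.Ioo (0 : ℝ) 1 →
      prFrac (C.powersetCard n)
          (fun Υ => ∃ Φ ∈ H, avgk k (f Φ) Υ ≥ avgk k (f Φ) C +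
            Real.sqrt (Real.log ((H.card : ℝ) / δ) / (2 * ((n / k : ℕ) : ℝ))))
        ≤ δ) := by
  classical
  have hDpos : (0:ℝ) < ((C.powersetCard n).card : ℝ) := by
    rw [Finset.card_powersetCard, hN]
    exact_mod_cast Nat.choose_pos hnN
  have part1 : ∀ ε : ℝ, 0 < ε →
      prFrac (C.powersetCard n)
          (fun Υ => ∃ Φ ∈ H, avgk k (f Φ) Υ - avgk k (f Φ) C ≥ ε)
        ≤ (H.card : ℝ) * Real.exp (-2 * ((n / k : ℕ) : ℝ) * ε ^ 2) := by
    intro ε hε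
    unfold prFrac
    rw [Finset.filter_congr_decidable, div_le_iff₀ hDpos]
    have hbound : ∀ Φ ∈ H,
        (((C.powersetCard n).filter (fun U => avgk k (f Φ) U - avgk k (f Φ) C ≥ ε)).card : ℝ)
          ≤ ((C.powersetCard n).card : ℝ) * Real.exp (-2 * ((n / k : ℕ) : ℝ) * ε ^ 2) :=
      fun Φ _ => core_count C hN hk hkn hnN (f Φ) (hf Φ) hε
    have hsub : ((C.powersetCard n).filter
          (fun Υ => ∃ Φ ∈ H, avgk k (f Φ) Υ - avgk k (f Φ) C ≥ ε))
        ⊆ H.biUnion (fun Φ =>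
            (C.powersetCard n).filter (fun U => avgk k (f Φ) U - avgk k (f Φ) C ≥ ε)) := by
      intro U hU
      rw [Finset.mem_filter] at hU
      obtain ⟨hUΩ, Φ, hΦH, hp⟩ := hU
      exact Finset.mem_biUnion.2 ⟨Φ, hΦH, Finset.mem_filter.2 ⟨hUΩ, hp⟩⟩
    have hcard : (((C.powersetCard n).filter
          (fun Υ => ∃ Φ ∈ H, avgk k (f Φ) Υ - avgk k (f Φ) C ≥ ε)).card : ℝ)
        ≤ ∑ Φ ∈ H, (((C.powersetCard n).filter
            (fun U => avgk k (f Φ) U - avgk k (f Φ) C ≥ ε)).card : ℝ) := by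
      have h1 := le_trans (Finset.card_le_card hsub) (Finset.card_biUnion_le)
      exact_mod_cast h1
    refine le_trans hcard (le_trans (Finset.sum_le_sum hbound) ?_)
    rw [Finset.sum_const, nsmul_eq_mul]
    ring_nf
    apply le_of_eq
    ring
  refine ⟨part1, ?_⟩
  intro δ hδ
  obtain ⟨hδ0, hδ1⟩ := hδ
  have hH1 : (1:ℝ) ≤ (H.card : ℝ) := by
    have := Finset.card_pos.2 hH
    exact_mod_cast this
  have hm1 : 1 ≤ n / k := (Nat.one_le_div_iff hk).2 hkn
  have hmR : (1:ℝ) ≤ ((n / k : ℕ) : ℝ) := by exact_mod_cast hm1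
  have hquot : (1:ℝ) < (H.card : ℝ) / δ := by
    rw [lt_div_iff₀ hδ0]
    nlinarith
  have hlog : 0 < Real.log ((H.card : ℝ) / δ) := Real.log_pos hquot
  have h2m : (0:ℝ) < 2 * ((n / k : ℕ) : ℝ) := by linarith
  set L : ℝ := Real.log ((H.card : ℝ) / δ) with hL
  set ε : ℝ := Real.sqrt (L / (2 * ((n / k : ℕ) : ℝ))) with hεdef
  have hεpos : 0 < ε := Real.sqrt_pos.2 (div_pos hlog h2m)
  have hsq : ε ^ 2 = L / (2 * ((n / k : ℕ) : ℝ)) :=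
    Real.sq_sqrt (le_of_lt (div_pos hlog h2m))
  have hev : prFrac (C.powersetCard n)
        (fun Υ => ∃ Φ ∈ H, avgk k (f Φ) Υ ≥ avgk k (f Φ) C + ε)
      = prFrac (C.powersetCard n)
        (fun Υ => ∃ Φ ∈ H, avgk k (f Φ) Υ - avgk k (f Φ) C ≥ ε) := by
    apply prFrac_congr
    intro U
    constructor
    · rintro ⟨Φ, hΦ, h⟩; exact ⟨Φ, hΦ, by linarith⟩
    · rintro ⟨Φ, hΦ, h⟩; exact ⟨Φ, hΦ, by linarith⟩
  rw [hev]
  refine le_trans (part1 ε hεpos) (le_of_eq ?_)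
  rw [hsq]
  have hmne : ((n / k : ℕ) : ℝ) ≠ 0 := by linarith
  have hexp : -2 * ((n / k : ℕ) : ℝ) * (L / (2 * ((n / k : ℕ) : ℝ))) = -L := by
    field_simp
  rw [hexp, Real.exp_neg, hL, Real.exp_log (by positivity)]
  have hHne : (H.card : ℝ) ≠ 0 := by linarith
  field_simp
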